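/- arXiv:0804.3071 — 2 statements merged into one kernel-verified Lean document; each statement's English description precedes it below -/
import Mathlib

section
/- The two-diagonal matrices satisfy the commutation relation U^{S,t}_{t+} · U^{S,t+1}_{S-} = U^{S,t}_{S-} · U^{S-1,t}_{t+}, and the common product U^{S,t}_{t+S-} has entries: (N+S-1-x)(N+S-2-x) if y=x+1; (N+S-1-x)(T-t-S+2x+1) if y=x; x(T-t-S+x) if y=x-1; and 0 otherwise. -/
open Finset

/-- U^{S,t}_{t+}(x,y): N+S-1-x if y=x+1, T-t-S+x if y=x, else 0.
Parameters N T S t are integers here. -/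
noncomputable def Utp (N T S t : ℤ) (x y : ℤ) : ℝ :=
  if y = x + 1 then (N : ℝ) + S - 1 - x
  else if y = x then (T : ℝ) - t - S + x
  else 0

/-- U^{S,t}_{S-}(x,y): x if y=x-1, S+N-1-x if y=x, else 0. -/
noncomputable def USm (N T S t : ℤ) (x y : ℤ) : ℝ :=
  if y = x - 1 then (x : ℝ)
  else if y = x then (S : ℝ) + N - 1 - x
  else 0

/-- The common product U^{S,t}_{t+S-}. -/
noncomputable def UtpSm (N T S t : ℤ) (x y : ℤ) : ℝ :=
  if y = x + 1 then ((N : ℝ) + S - 1 - x) * ((N : ℝ) + S - 2 - x)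
  else if y = x then ((N : ℝ) + S - 1 - x) * ((T : ℝ) - t - S + 2 * x + 1)
  else if y = x - 1 then (x : ℝ) * ((T : ℝ) - t - S + x)
  else 0

lemma Icc_expand (x : ℤ) (f : ℤ → ℝ) :
    ∑ y ∈ Finset.Icc (x - 1) (x + 1), f y = f (x - 1) + f x + f (x + 1) := by
  have h : Finset.Icc (x - 1) (x + 1) = {x - 1, x, x + 1} := by
    ext a; simp only [Finset.mem_Icc, Finset.mem_insert, Finset.mem_singleton]; omega
  rw [h, Finset.sum_insert (by simp only [Finset.mem_insert, Finset.mem_singleton]; omega),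
    Finset.sum_insert (by simp only [Finset.mem_singleton]; omega), Finset.sum_singleton]
  ring

lemma key (N T S t : ℤ) (x z : ℤ) :
    ∑ y ∈ Finset.Icc (x - 1) (x + 1), Utp N T S t x y * USm N T S (t + 1) y z =
      UtpSm N T S t x z := by
  rw [Icc_expand]
  simp only [Utp, USm, UtpSm,
    show x - 1 ≠ x + 1 by omega, show x - 1 ≠ x by omega, show x ≠ x + 1 by omega,
    show x + 1 ≠ x - 1 - 1 by omega, show x + 1 ≠ x - 1 by omega,
    show x ≠ x - 1 - 1 by omega, show x + 1 - 1 = x by omega, show x - 1 - 1 = x - 2 by omega,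
    if_false, if_true, zero_mul, mul_zero, zero_add, add_zero]
  split_ifs <;> first | omega | (push_cast; ring)

lemma key2 (N T S t : ℤ) (x z : ℤ) :
    ∑ y ∈ Finset.Icc (x - 1) (x + 1), USm N T S t x y * Utp N T (S - 1) t y z =
      UtpSm N T S t x z := by
  rw [Icc_expand]
  simp only [Utp, USm, UtpSm,
    show x - 1 ≠ x + 1 by omega, show x - 1 ≠ x by omega, show x ≠ x + 1 by omega,
    show x + 1 ≠ x - 1 - 1 by omega, show x + 1 ≠ x - 1 by omega,
    show x ≠ x - 1 - 1 by omega, show x - 1 + 1 = x by omega, show x + 1 + 1 = x + 2 by omega,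
    if_false, if_true, zero_mul, mul_zero, zero_add, add_zero]
  split_ifs <;> first | omega | (push_cast; ring)

/-- Commutation relation U^{S,t}_{t+} · U^{S,t+1}_{S-} = U^{S,t}_{S-} · U^{S-1,t}_{t+},
with common product U^{S,t}_{t+S-}.  The matrix product (AB)(x,z) = Σ_y A(x,y)B(y,z)
reduces to a sum over y ∈ {x-1, x, x+1} since all matrices are two-diagonal. -/
theorem U_commutation (N T S t : ℤ) :
    (∀ x z : ℤ,
      ∑ y ∈ Finset.Icc (x - 1) (x + 1), Utp N T S t x y * USm N T S (t + 1) y z =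
        ∑ y ∈ Finset.Icc (x - 1) (x + 1), USm N T S t x y * Utp N T (S - 1) t y z) ∧
    (∀ x z : ℤ,
      ∑ y ∈ Finset.Icc (x - 1) (x + 1), Utp N T S t x y * USm N T S (t + 1) y z =
        UtpSm N T S t x z) := by
  exact ⟨fun x z => by rw [key, key2], fun x z => key N T S t x z⟩
end

section
/- The co-transition probabilities of the Markov chain of sections are given by: Prob{X(t-1)=(y_1,…,y_N) | X(t)=(x_1,…,x_N)} = [∏_{i<j}(y_j-y_i) · ∏_{i: y_i=x_i-1} x_i · ∏_{i: y_i=x_i}(t+N-1-x_i)] / [(t)_N · ∏_{i<j}(x_j-x_i)] when all y_i-x_i ∈ {-1,0}, and 0 otherwise. Equivalently, this expression equals [Prob{X(t)=x | X(t-1)=y} · ρ_{S,t-1}(y)] / ρ_{S,t}(x). -/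
open Finset

noncomputable def poch (a : ℝ) (n : ℕ) : ℝ := ∏ k ∈ Finset.range n, (a + k)

noncomputable def pairProd {N : ℕ} (f : Fin N → ℤ) : ℝ :=
  ∏ p ∈ Finset.univ.filter (fun p : Fin N × Fin N => p.1 < p.2), ((f p.2 - f p.1 : ℤ) : ℝ)

noncomputable def secX (N T S t : ℕ) : Finset ℤ :=
  Finset.Icc (max 0 ((t : ℤ) + S - T)) (min ((t : ℤ) + N - 1) ((S : ℤ) + N - 1))

noncomputable def Xcal (N T S t : ℕ) : Finset (Fin N → ℤ) :=
  (Fintype.piFinset fun _ => secX N T S t).filter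
    (fun f => ∀ i j : Fin N, i < j → f i < f j)

/-- Forward transition P^{S,t}_{t+}. -/
noncomputable def Ptp (N T S t : ℕ) (X Y : Fin N → ℤ) : ℝ :=
  if ∀ i, Y i = X i ∨ Y i = X i + 1 then
    (pairProd Y *
      ∏ i, (if Y i = X i + 1 then (N : ℝ) + S - X i - 1 else (X i : ℝ) + T - t - S)) /
      (poch ((T : ℝ) - t) N * pairProd X)
  else 0

/-- Co-transition probability P^{S,t}_{t-}. -/
noncomputable def Ptm (N T S t : ℕ) (X Y : Fin N → ℤ) : ℝ :=
  if ∀ i, Y i = X i ∨ Y i = X i - 1 then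
    (pairProd Y *
      ∏ i, (if Y i = X i - 1 then (X i : ℝ) else (t : ℝ) + N - 1 - X i)) /
      (poch (t : ℝ) N * pairProd X)
  else 0

noncomputable def w (N T S t : ℕ) (x : ℤ) : ℝ :=
  1 / ((Nat.factorial x.toNat : ℝ) * (Nat.factorial ((t : ℤ) + N - 1 - x).toNat : ℝ) *
    (Nat.factorial ((S : ℤ) + N - 1 - x).toNat : ℝ) *
    (Nat.factorial ((T : ℤ) - t - S + x).toNat : ℝ))

noncomputable def Zc (N T S t : ℕ) : ℝ :=
  (∏ j ∈ Finset.range N,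
      (poch ((t : ℝ) + 1) j * poch ((T : ℝ) - t + 1) j *
        (Nat.factorial (S + N - 1 - j) : ℝ) * (Nat.factorial (T - S + j) : ℝ)) /
      (poch ((T : ℝ) + 1) j * (Nat.factorial j : ℝ))) *
    ((Nat.factorial t : ℝ) * (Nat.factorial (T - t) : ℝ) / (Nat.factorial T : ℝ)) ^ N

noncomputable def rho (N T S t : ℕ) (Y : Fin N → ℤ) : ℝ :=
  Zc N T S t * (pairProd Y) ^ 2 * ∏ i, w N T S t (Y i)

/-! ### Auxiliary lemmas -/

lemma poch_shift (a : ℝ) (n : ℕ) : poch a n * (a + n) = a * poch (a+1) n := by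
  have h1 : poch a (n+1) = poch a n * (a + n) := Finset.prod_range_succ _ _
  have h2 : poch a (n+1) = a * poch (a+1) n := by
    rw [poch, Finset.prod_range_succ', mul_comm]
    congr 1
    · norm_num
    · unfold poch; apply Finset.prod_congr rfl; intro k _; push_cast; ring
  rw [← h1, h2]

lemma poch_pos {a : ℝ} (ha : 0 < a) (n : ℕ) : 0 < poch a n := by
  apply Finset.prod_pos; intro k _; positivity

lemma fact_int (z : ℤ) (hz : 1 ≤ z) :
    ((Nat.factorial z.toNat : ℕ) : ℝ) = (z:ℝ) * (Nat.factorial (z-1).toNat : ℝ) := by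
  have h1 : z.toNat = (z-1).toNat + 1 := by omega
  have h2 : (((z-1).toNat : ℤ) : ℝ) = (z : ℝ) - 1 := by
    rw [Int.toNat_of_nonneg (by omega)]; push_cast; ring
  rw [h1, Nat.factorial_succ]
  push_cast at h2 ⊢
  rw [h2]; ring

lemma aux1 (u A B C D : ℝ) (hu : u ≠ 0) :
    u * (1 / (A * (u * B) * C * D)) = 1 / (A * B * C * D) := by
  rw [show A * (u * B) * C * D = u * (A * B * C * D) by ring, one_div, mul_inv,
    ← mul_assoc, mul_inv_cancel₀ hu, one_mul, one_div]

lemma aux2 (v A B C D : ℝ) (hv : v ≠ 0) :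
    v * (1 / (A * B * C * (v * D))) = 1 / (A * B * C * D) := by
  rw [show A * B * C * (v * D) = v * (A * B * C * D) by ring, one_div, mul_inv,
    ← mul_assoc, mul_inv_cancel₀ hv, one_mul, one_div]

lemma aux3 (v A B C D : ℝ) (hv : v ≠ 0) :
    v * (1 / (A * B * (v * C) * D)) = 1 / (A * B * C * D) := by
  rw [show A * B * (v * C) * D = v * (A * B * C * D) by ring, one_div, mul_inv,
    ← mul_assoc, mul_inv_cancel₀ hv, one_mul, one_div]

lemma aux4 (u A B C D : ℝ) (hu : u ≠ 0) :
    u * (1 / (u * A * B * C * D)) = 1 / (A * B * C * D) := by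
  rw [show u * A * B * C * D = u * (A * B * C * D) by ring, one_div, mul_inv,
    ← mul_assoc, mul_inv_cancel₀ hu, one_mul, one_div]

lemma w_pos (N T S t : ℕ) (x : ℤ) : 0 < w N T S t x := by
  unfold w
  have h1 := Nat.factorial_pos x.toNat
  have h2 := Nat.factorial_pos ((t : ℤ) + N - 1 - x).toNat
  have h3 := Nat.factorial_pos ((S : ℤ) + N - 1 - x).toNat
  have h4 := Nat.factorial_pos ((T : ℤ) - t - S + x).toNat
  positivity

lemma pairProd_pos {N : ℕ} {f : Fin N → ℤ} (hf : ∀ i j : Fin N, i < j → f i < f j) :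
    0 < pairProd f := by
  unfold pairProd
  apply Finset.prod_pos
  intro p hp
  have h := hf p.1 p.2 (Finset.mem_filter.mp hp).2
  exact_mod_cast (by omega : (0:ℤ) < f p.2 - f p.1)

lemma step_eq (N T S t : ℕ) (ht1 : 1 ≤ t) (x y : ℤ)
    (hx1 : (t:ℤ) + S - T ≤ x) (hx2 : x ≤ (S:ℤ) + N - 1)
    (hy0 : 0 ≤ y) (hy1 : y ≤ ((t:ℤ) - 1) + N - 1)
    (hcase : y = x ∨ y = x - 1) :
    (if y = x - 1 then (x:ℝ) else (t:ℝ) + N - 1 - x) * w N T S t x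
      = (if x = y + 1 then (N:ℝ) + S - y - 1 else (y:ℝ) + T - (t-1:ℕ) - S) *
        w N T S (t-1) y := by
  have hct : ((t - 1 : ℕ) : ℤ) = (t : ℤ) - 1 := by omega
  have hctR : ((t - 1 : ℕ) : ℝ) = (t : ℝ) - 1 := by
    rw [Nat.cast_sub ht1, Nat.cast_one]
  rcases hcase with hc | hc
  · subst hc
    rw [if_neg (by omega), if_neg (by omega)]
    unfold w
    rw [hct]
    have e1 : (t:ℤ) - 1 + N - 1 - y = ((t:ℤ) + N - 1 - y) - 1 := by ring
    have e2 : (T:ℤ) - ((t:ℤ) - 1) - S + y = ((T:ℤ) - t - S + y) + 1 := by ring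
    rw [e1, e2]
    have hz1 : (1:ℤ) ≤ (t:ℤ) + N - 1 - y := by omega
    have hz2 : (1:ℤ) ≤ ((T:ℤ) - t - S + y) + 1 := by omega
    rw [fact_int _ hz1, fact_int _ hz2]
    rw [show ((T:ℤ) - t - S + y) + 1 - 1 = (T:ℤ) - t - S + y by ring]
    have hc1 : (((t:ℤ) + N - 1 - y : ℤ) : ℝ) = (t:ℝ) + (N:ℝ) - 1 - (y:ℝ) := by
      push_cast; ring
    have hc2 : ((((T:ℤ) - t - S + y) + 1 : ℤ) : ℝ) = (y:ℝ) + (T:ℝ) - ((t-1:ℕ):ℝ) - (S:ℝ) := by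
      rw [hctR]; push_cast; ring
    rw [← hc1, ← hc2]
    rw [aux1 _ _ _ _ _ (by exact_mod_cast (by omega : ((t:ℤ) + N - 1 - y) ≠ 0)),
        aux2 _ _ _ _ _ (by exact_mod_cast (by omega : (((T:ℤ) - t - S + y) + 1) ≠ 0))]
  · subst hc
    rw [if_pos rfl, if_pos (by omega)]
    unfold w
    rw [hct]
    have e2 : (t:ℤ) - 1 + N - 1 - (x-1) = (t:ℤ) + N - 1 - x := by ring
    have e3 : (S:ℤ) + N - 1 - (x-1) = ((S:ℤ) + N - 1 - x) + 1 := by ring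
    have e4 : (T:ℤ) - ((t:ℤ) - 1) - S + (x-1) = (T:ℤ) - t - S + x := by ring
    rw [e2, e3, e4]
    have hz1 : (1:ℤ) ≤ x := by omega
    have hz2 : (1:ℤ) ≤ ((S:ℤ) + N - 1 - x) + 1 := by omega
    rw [fact_int x hz1, fact_int _ hz2]
    rw [show ((S:ℤ) + N - 1 - x) + 1 - 1 = (S:ℤ) + N - 1 - x by ring]
    have hc2 : ((((S:ℤ) + N - 1 - x) + 1 : ℤ) : ℝ) = (N:ℝ) + (S:ℝ) - ((x-1:ℤ):ℝ) - 1 := by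
      push_cast; ring
    rw [← hc2]
    rw [aux4 _ _ _ _ _ (by exact_mod_cast (by omega : x ≠ 0)),
        aux3 _ _ _ _ _ (by exact_mod_cast (by omega : (((S:ℤ) + N - 1 - x) + 1) ≠ 0))]

lemma Zc_pos (N T S t : ℕ) (ht : t ≤ T) : 0 < Zc N T S t := by
  unfold Zc
  apply mul_pos
  · apply Finset.prod_pos
    intro j _
    apply div_pos
    · have h1 : (0:ℝ) < (t:ℝ) + 1 := by positivity
      have h2 : (0:ℝ) < (T:ℝ) - t + 1 := by
        have : (t:ℝ) ≤ T := by exact_mod_cast ht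
        linarith
      have := Nat.factorial_pos (S + N - 1 - j)
      have := Nat.factorial_pos (T - S + j)
      have := poch_pos h1 j
      have := poch_pos h2 j
      positivity
    · have h3 : (0:ℝ) < (T:ℝ) + 1 := by positivity
      have := poch_pos h3 j
      have := Nat.factorial_pos j
      positivity
  · have := Nat.factorial_pos t
    have := Nat.factorial_pos (T - t)
    have := Nat.factorial_pos T
    positivity

lemma expand_aux (N : ℕ) (G : ℕ → ℝ) (Q a : ℝ) :
    (∏ j ∈ Finset.range N, G j) * Q^N * poch a N
      = ∏ j ∈ Finset.range N, (G j * Q * (a + j)) := by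
  rw [poch, ← Finset.card_range N, ← Finset.prod_const Q, Finset.card_range,
    ← Finset.prod_mul_distrib, ← Finset.prod_mul_distrib]

lemma ratio_core (a b a' b' c1 c2 pd t' u f1 f2 fT j' : ℝ)
    (hA : a * (t' + j') = t' * a') (hB : b' * (u + j') = u * b) :
    a * b * c1 * c2 / pd * (f1 * (u * f2) / fT) * (t' + j')
      = a' * b' * c1 * c2 / pd * (t' * f1 * f2 / fT) * (u + j') := by
  linear_combination (pd⁻¹*fT⁻¹*c1*c2*f1*u*f2*b)*hA - (pd⁻¹*fT⁻¹*c1*c2*f1*t'*f2*a')*hB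

lemma Zc_ratio (N T S t : ℕ) (ht1 : 1 ≤ t) (ht : t ≤ T) :
    Zc N T S (t-1) * poch (t:ℝ) N = Zc N T S t * poch ((T:ℝ) - t + 1) N := by
  have hctR : ((t - 1 : ℕ) : ℝ) = (t : ℝ) - 1 := by
    rw [Nat.cast_sub ht1, Nat.cast_one]
  have hTt : T - (t-1) = (T - t) + 1 := by omega
  unfold Zc
  rw [expand_aux, expand_aux]
  apply Finset.prod_congr rfl
  intro j _
  rw [hctR, hTt]
  rw [show (t:ℝ) - 1 + 1 = (t:ℝ) by ring]
  rw [show (T:ℝ) - ((t:ℝ) - 1) + 1 = ((T:ℝ) - t + 1) + 1 by ring]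
  rw [Nat.factorial_succ (T - t)]
  have hft : (Nat.factorial t : ℝ) = t * (Nat.factorial (t-1) : ℝ) := by
    have h := Nat.factorial_succ (t-1)
    rw [show t - 1 + 1 = t from by omega] at h
    rw [h]; push_cast [Nat.cast_sub ht1]; ring
  have hcast2 : ((T - t + 1 : ℕ) : ℝ) = (T:ℝ) - t + 1 := by
    push_cast [Nat.cast_sub ht]; ring
  rw [hft, Nat.cast_mul, hcast2]
  exact ratio_core _ _ _ _ _ _ _ _ _ _ _ _ _ (poch_shift (t:ℝ) j) (poch_shift ((T:ℝ) - t + 1) j)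

/-- The co-transition probabilities are given by the stated formula: equivalently,
P^{S,t}_{t-}(x,y) = P^{S,t-1}_{t+}(y,x) · ρ_{S,t-1}(y) / ρ_{S,t}(x). -/
theorem co_transition (N T S t : ℕ) (hN : 1 ≤ N) (hS : S ≤ T) (ht1 : 1 ≤ t) (ht : t ≤ T)
    (X : Fin N → ℤ) (hX : X ∈ Xcal N T S t)
    (Y : Fin N → ℤ) (hY : Y ∈ Xcal N T S (t - 1)) :
    Ptm N T S t X Y = Ptp N T S (t - 1) Y X * rho N T S (t - 1) Y / rho N T S t X := by
  classical
  obtain ⟨hXp, hXinc⟩ := Finset.mem_filter.mp hX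
  obtain ⟨hYp, hYinc⟩ := Finset.mem_filter.mp hY
  have hXb : ∀ i, X i ∈ secX N T S t := fun i => Fintype.mem_piFinset.mp hXp i
  have hYb : ∀ i, Y i ∈ secX N T S (t-1) := fun i => Fintype.mem_piFinset.mp hYp i
  have hct : ((t - 1 : ℕ) : ℤ) = (t : ℤ) - 1 := by omega
  have hx1 : ∀ i, (t:ℤ) + S - T ≤ X i := fun i =>
    le_trans (le_max_right _ _) (Finset.mem_Icc.mp (hXb i)).1
  have hx2 : ∀ i, X i ≤ (S:ℤ) + N - 1 := fun i =>
    le_trans (Finset.mem_Icc.mp (hXb i)).2 (min_le_right _ _)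
  have hy0 : ∀ i, 0 ≤ Y i := fun i =>
    le_trans (le_max_left _ _) (Finset.mem_Icc.mp (hYb i)).1
  have hy1 : ∀ i, Y i ≤ ((t:ℤ) - 1) + N - 1 := by
    intro i
    have h := le_trans (Finset.mem_Icc.mp (hYb i)).2 (min_le_left _ _)
    omega
  unfold Ptm Ptp rho
  by_cases h : ∀ i, Y i = X i ∨ Y i = X i - 1
  · have h' : ∀ i, X i = Y i ∨ X i = Y i + 1 := fun i => by rcases h i with h0 | h0 <;> omega
    rw [if_pos h, if_pos h']
    have hctR : ((t - 1 : ℕ) : ℝ) = (t : ℝ) - 1 := by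
      rw [Nat.cast_sub ht1, Nat.cast_one]
    have hpeq : poch ((T:ℝ) - ((t-1:ℕ):ℝ)) N = poch ((T:ℝ) - t + 1) N := by
      rw [hctR, show (T:ℝ) - ((t:ℝ) - 1) = (T:ℝ) - t + 1 by ring]
    rw [hpeq]
    have hpX : 0 < pairProd X := pairProd_pos hXinc
    have hpY : 0 < pairProd Y := pairProd_pos hYinc
    have hZ0 : 0 < Zc N T S t := Zc_pos N T S t ht
    have hZ1 : 0 < Zc N T S (t-1) := Zc_pos N T S (t-1) (by omega)
    have hW0 : 0 < ∏ i, w N T S t (X i) := Finset.prod_pos fun i _ => w_pos N T S t (X i)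
    have hW1 : 0 < ∏ i, w N T S (t-1) (Y i) :=
      Finset.prod_pos fun i _ => w_pos N T S (t-1) (Y i)
    have hpcht : 0 < poch (t:ℝ) N := poch_pos (by exact_mod_cast ht1) N
    have hpchT : 0 < poch ((T:ℝ) - t + 1) N := by
      apply poch_pos
      have : (t:ℝ) ≤ T := by exact_mod_cast ht
      linarith
    have key1 : (∏ i, (if Y i = X i - 1 then (X i:ℝ) else (t:ℝ) + N - 1 - X i)) *
          (∏ i, w N T S t (X i))
        = (∏ i, (if X i = Y i + 1 then (N:ℝ) + S - Y i - 1 else (Y i:ℝ) + T - (t-1:ℕ) - S)) *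
          (∏ i, w N T S (t-1) (Y i)) := by
      rw [← Finset.prod_mul_distrib, ← Finset.prod_mul_distrib]
      exact Finset.prod_congr rfl fun i _ =>
        step_eq N T S t ht1 (X i) (Y i) (hx1 i) (hx2 i) (hy0 i) (hy1 i) (h i)
    have key2 := Zc_ratio N T S t ht1 ht
    set Pm := ∏ i, (if Y i = X i - 1 then (X i:ℝ) else (t:ℝ) + N - 1 - X i) with hPm
    set Pp := ∏ i, (if X i = Y i + 1 then (N:ℝ) + S - Y i - 1 else (Y i:ℝ) + T - (t-1:ℕ) - S)
      with hPp
    set W0 := ∏ i, w N T S t (X i) with hW0d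
    set W1 := ∏ i, w N T S (t-1) (Y i) with hW1d
    set pX := pairProd X
    set pY := pairProd Y
    set Z0 := Zc N T S t
    set Z1 := Zc N T S (t-1)
    set pc0 := poch (t:ℝ) N
    set pc1 := poch ((T:ℝ) - t + 1) N
    rw [div_mul_eq_mul_div, div_div, div_eq_div_iff (by positivity) (by positivity)]
    linear_combination (pY^2*pX^2*pc1*Z0)*key1 - (pY^2*pX^2*Pp*W1)*key2
  · rw [if_neg h, if_neg (fun hc => h fun i => by rcases hc i with h0 | h0 <;> omega)]
    simp
end
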